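/- arXiv:1203.2112 — 3 statements merged into one kernel-verified Lean document; each statement's English description precedes it below -/
import Mathlib

section
/- In the type A_n monomial realization of crystals with cyclic order p_{i,j} = 1 for i < j and p_{i,j} = 0 for i > j, the following hold for all 1 ≤ i ≤ n and 1 ≤ k ≤ n, with the convention Y_{m,0} = Y_{m,n+1} = 1: (i) f̃_k f̃_{k−1} ⋯ f̃_1 ( Y_{n−i+1,1} ) = Y_{n−i+1,k+1} · Y_{n−i+2,k}^{−1}, in particular all these monomials are nonzero; and (ii) ẽ_k ẽ_{k−1} ⋯ ẽ_1 ( Y_{i,1}^{−1} ) = Y_{i−k,k} · Y_{i−k,k+1}^{−1}. -/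
/-- A monomial `Y = ∏_{m∈ℤ, 1≤i≤n} Y_{m,i}^{l_{m,i}}` is encoded by its exponents
`l : ℤ → ℕ → ℤ` (finitely supported in the cases of interest). -/
abbrev Mono := ℤ → ℕ → ℤ

/-- The partial sum `S_k = Σ_{m≤k} l_{m,i}`. -/
noncomputable def psum (l : Mono) (i : ℕ) (k : ℤ) : ℤ := ∑ᶠ m ∈ Set.Iic k, l m i

/-- `φ_i(Y) = max_{k∈ℤ} Σ_{m≤k} l_{m,i}`. -/
noncomputable def phiM (l : Mono) (i : ℕ) : ℤ := sSup (Set.range (psum l i))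

/-- `wt(Y)(h_i) = Σ_m l_{m,i}`. -/
noncomputable def wtM (l : Mono) (i : ℕ) : ℤ := ∑ᶠ m, l m i

/-- `ε_i(Y) = φ_i(Y) − wt(Y)(h_i)`. -/
noncomputable def epsM (l : Mono) (i : ℕ) : ℤ := phiM l i - wtM l i

/-- Exponents of the monomial `A_{m,i}` for type `A_n` with the cyclic order `p_{i,j} = 1`
(`i<j`), `0` (`i>j`): `A_{m,i} = Y_{m,i} Y_{m+1,i} Y_{m,i+1}^{−1} Y_{m+1,i−1}^{−1}`, the
factors `Y_{·,0}` and `Y_{·,n+1}` being absent. -/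
def Aexp (n : ℕ) (m : ℤ) (i : ℕ) : Mono := fun m' i' =>
  (if m' = m ∧ i' = i then 1 else 0) + (if m' = m + 1 ∧ i' = i then 1 else 0)
  + (if m' = m ∧ i' = i + 1 ∧ i + 1 ≤ n then -1 else 0)
  + (if m' = m + 1 ∧ i' + 1 = i ∧ 1 ≤ i' then -1 else 0)

/-- The Kashiwara operator `f̃_i` on monomials (`none` encodes `0`):
`f̃_i(Y) = A_{n_f,i}^{−1}·Y` if `φ_i(Y) > 0`, with
`n_f = min{k : Σ_{m≤k} l_{m,i} = φ_i(Y)}`, and `f̃_i(Y) = 0` if `φ_i(Y) = 0`. -/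
noncomputable def ftil (n i : ℕ) (Y : Option Mono) : Option Mono :=
  Y.bind fun l =>
    if 0 < phiM l i then some (l - Aexp n (sInf {k : ℤ | psum l i k = phiM l i}) i) else none

/-- The Kashiwara operator `ẽ_i` on monomials (`none` encodes `0`):
`ẽ_i(Y) = A_{n_e,i}·Y` if `ε_i(Y) > 0`, with
`n_e = max{k : Σ_{m≤k} l_{m,i} = φ_i(Y)}`, and `ẽ_i(Y) = 0` if `ε_i(Y) = 0`. -/
noncomputable def etil (n i : ℕ) (Y : Option Mono) : Option Mono :=
  Y.bind fun l =>
    if 0 < epsM l i then some (l + Aexp n (sSup {k : ℤ | psum l i k = phiM l i}) i) else none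


lemma sumIic (a K c : ℤ) :
    (∑ᶠ m ∈ Set.Iic K, (if m = a then c else 0)) = if a ≤ K then c else 0 := by
  rw [finsum_mem_def, finsum_eq_single _ a]
  · simp [Set.indicator, Set.mem_Iic]
  · intro b hb
    simp [Set.indicator, hb]

lemma wt_single (a c : ℤ) : (∑ᶠ m, (if m = a then c else 0) : ℤ) = c := by
  rw [finsum_eq_single _ a (by intro b hb; simp [hb])]
  simp

lemma sSupInd1 (a : ℤ) : sSup (Set.range fun K => if a ≤ K then (1:ℤ) else 0) = 1 := by
  apply le_antisymm
  · apply csSup_le ⟨_, Set.mem_range_self a⟩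
    rintro x ⟨K, rfl⟩
    dsimp only
    split_ifs <;> omega
  · have hb : BddAbove (Set.range fun K => if a ≤ K then (1:ℤ) else 0) := by
      refine ⟨1, ?_⟩
      rintro x ⟨K, rfl⟩
      dsimp only
      split_ifs <;> omega
    exact le_csSup hb ⟨a, by simp⟩

lemma sSupIndNeg (a : ℤ) : sSup (Set.range fun K => if a ≤ K then (-1:ℤ) else 0) = 0 := by
  apply le_antisymm
  · apply csSup_le ⟨_, Set.mem_range_self a⟩
    rintro x ⟨K, rfl⟩
    dsimp only
    split_ifs <;> omega
  · have hb : BddAbove (Set.range fun K => if a ≤ K then (-1:ℤ) else 0) := by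
      refine ⟨0, ?_⟩
      rintro x ⟨K, rfl⟩
      dsimp only
      split_ifs <;> omega
    refine le_csSup hb ⟨a - 1, ?_⟩
    dsimp only
    rw [if_neg (by omega)]

/-- Intermediate monomials of the `f̃` chain. -/
def Lf (n : ℕ) (M : ℤ) (k : ℕ) : Mono := fun m' i' =>
  (if m' = M ∧ i' = k + 1 ∧ k + 1 ≤ n then 1 else 0)
    + (if m' = M + 1 ∧ i' = k ∧ 1 ≤ k then -1 else 0)

/-- Intermediate monomials of the `ẽ` chain. -/
def Le (n : ℕ) (a : ℤ) (k : ℕ) : Mono := fun m' i' =>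
  (if m' = a - k ∧ i' = k ∧ 1 ≤ k then 1 else 0)
    + (if m' = a - k ∧ i' = k + 1 ∧ k + 1 ≤ n then -1 else 0)

lemma fstep (n j : ℕ) (M : ℤ) (hj : j + 1 ≤ n) :
    ftil n (j + 1) (some (Lf n M j)) = some (Lf n M (j + 1)) := by
  have hcol : ∀ m, Lf n M j m (j + 1) = if m = M then 1 else 0 := by
    intro m
    simp only [Lf, and_true, true_and]
    split_ifs <;> omega
  have hpsum : psum (Lf n M j) (j + 1) = fun K => if M ≤ K then 1 else 0 := by
    funext K
    unfold psum
    rw [finsum_mem_congr rfl fun m _ => hcol m, sumIic]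
  have hphi : phiM (Lf n M j) (j + 1) = 1 := by
    unfold phiM
    rw [hpsum]
    exact sSupInd1 M
  have hset : {k : ℤ | psum (Lf n M j) (j + 1) k = phiM (Lf n M j) (j + 1)} = Set.Ici M := by
    rw [hphi, hpsum]
    ext K
    simp only [Set.mem_setOf_eq, Set.mem_Ici]
    split_ifs with h <;> omega
  show (if 0 < phiM (Lf n M j) (j + 1) then
      some (Lf n M j - Aexp n
        (sInf {k : ℤ | psum (Lf n M j) (j + 1) k = phiM (Lf n M j) (j + 1)}) (j + 1))
    else none) = some (Lf n M (j + 1))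
  rw [hset, csInf_Ici, hphi, if_pos Int.one_pos]
  congr 1
  funext m' i'
  simp only [Pi.sub_apply, Lf, Aexp, and_true, true_and]
  split_ifs <;> omega

lemma estep (n j : ℕ) (a : ℤ) (hj : j + 1 ≤ n) :
    etil n (j + 1) (some (Le n a j)) = some (Le n a (j + 1)) := by
  have hcol : ∀ m, Le n a j m (j + 1) = if m = a - j then -1 else 0 := by
    intro m
    simp only [Le, and_true, true_and]
    split_ifs <;> omega
  have hpsum : psum (Le n a j) (j + 1) = fun K => if a - j ≤ K then -1 else 0 := by
    funext K
    unfold psum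
    rw [finsum_mem_congr rfl fun m _ => hcol m, sumIic]
  have hphi : phiM (Le n a j) (j + 1) = 0 := by
    unfold phiM
    rw [hpsum]
    exact sSupIndNeg _
  have hwt : wtM (Le n a j) (j + 1) = -1 := by
    unfold wtM
    rw [finsum_congr hcol, wt_single]
  have heps : epsM (Le n a j) (j + 1) = 1 := by
    unfold epsM
    rw [hphi, hwt]
    norm_num
  have hset : {k : ℤ | psum (Le n a j) (j + 1) k = phiM (Le n a j) (j + 1)}
      = Set.Iic (a - j - 1) := by
    rw [hphi, hpsum]
    ext K
    simp only [Set.mem_setOf_eq, Set.mem_Iic]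
    split_ifs with h <;> simp <;> omega
  show (if 0 < epsM (Le n a j) (j + 1) then
      some (Le n a j + Aexp n
        (sSup {k : ℤ | psum (Le n a j) (j + 1) k = phiM (Le n a j) (j + 1)}) (j + 1))
    else none) = some (Le n a (j + 1))
  rw [hset, csSup_Iic, heps, if_pos Int.one_pos]
  congr 1
  funext m' i'
  simp only [Pi.add_apply, Le, Aexp, and_true, true_and]
  split_ifs <;> omega

/-- Proposition 6.2: in the type `A_n` monomial realization,
`f̃_k⋯f̃_1(Y_{n−i+1,1}) = Y_{n−i+1,k+1}·Y_{n−i+2,k}^{−1}` and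
`ẽ_k⋯ẽ_1(Y_{i,1}^{−1}) = Y_{i−k,k}·Y_{i−k,k+1}^{−1}` for all `1 ≤ i ≤ n`, `1 ≤ k ≤ n`
(conventions `Y_{m,0} = Y_{m,n+1} = 1`); in particular all these monomials are nonzero. -/
theorem stmt16 (n i k : ℕ) (hn : 1 ≤ n) (hi : 1 ≤ i) (hin : i ≤ n)
    (hk : 1 ≤ k) (hkn : k ≤ n) :
    ((List.range k).foldl (fun Y j => ftil n (j + 1) Y)
        (some fun m' i' => if m' = ((n - i + 1 : ℕ) : ℤ) ∧ i' = 1 then 1 else 0)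
      = some fun m' i' =>
          (if m' = ((n - i + 1 : ℕ) : ℤ) ∧ i' = k + 1 ∧ k + 1 ≤ n then 1 else 0)
          + (if m' = ((n - i + 2 : ℕ) : ℤ) ∧ i' = k then -1 else 0)) ∧
    ((List.range k).foldl (fun Y j => etil n (j + 1) Y)
        (some fun m' i' => if m' = (i : ℤ) ∧ i' = 1 then -1 else 0)
      = some fun m' i' =>
          (if m' = (i : ℤ) - k ∧ i' = k then 1 else 0)
          + (if m' = (i : ℤ) - k ∧ i' = k + 1 ∧ k + 1 ≤ n then -1 else 0)) := by

  constructor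
  · set M : ℤ := ((n - i + 1 : ℕ) : ℤ) with hM
    have hstart : (fun m' i' => if m' = M ∧ i' = 1 then (1:ℤ) else 0) = Lf n M 0 := by
      funext m' i'
      simp only [Lf, and_true, true_and]
      split_ifs <;> omega
    have key : ∀ K, K ≤ n →
        (List.range K).foldl (fun Y j => ftil n (j + 1) Y) (some (Lf n M 0))
          = some (Lf n M K) := by
      intro K
      induction K with
      | zero => intro _; simp
      | succ K ih =>
        intro hK
        rw [List.range_succ, List.foldl_append, ih (by omega)]
        simpa using fstep n K M hK
    rw [hstart, key k hkn]
    congr 1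
    funext m' i'
    simp only [Lf, and_true, true_and]
    split_ifs <;> omega
  · set a : ℤ := (i : ℤ) with ha
    have hstart : (fun m' i' => if m' = a ∧ i' = 1 then (-1:ℤ) else 0) = Le n a 0 := by
      funext m' i'
      simp only [Le, and_true, true_and]
      split_ifs <;> omega
    have key : ∀ K, K ≤ n →
        (List.range K).foldl (fun Y j => etil n (j + 1) Y) (some (Le n a 0))
          = some (Le n a K) := by
      intro K
      induction K with
      | zero => intro _; simp
      | succ K ih =>
        intro hK
        rw [List.range_succ, List.foldl_append, ih (by omega)]
        simpa using estep n K a hK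
    rw [hstart, key k hkn]
    congr 1
    funext m' i'
    simp only [Le, and_true, true_and]
    split_ifs <;> omega
end

section
/- Let t = diag(t_1, …, t_{n+1}) ∈ SL_{n+1}(ℂ) and g = t·Θ(c). Then the decoration evaluates as f_B(g) := Σ_{i=1}^{n} ( Δ^{(1)}_i(g) + Δ^{(2)}_i(g) ) / Δ^{(0)}_i(g) = Σ_{j=1}^{n} [ Δ^{(1)}_j(Θ(c)) + (t_j/t_{j+1}) · minor of Θ(c) on rows {j} ∪ {j+2,…,n+1} and columns {1,…,n+1−j} ], where Δ^{(1)}_i(g) is the minor of g on rows {n+2−i,…,n+1} and columns {1,…,i−1,i+1}, Δ^{(2)}_i(g) is the minor of g on rows {n+1−i} ∪ {n+3−i,…,n+1} and columns {1,…,i}, and Δ^{(0)}_i(g) is the minor of g on rows {n+2−i,…,n+1} and columns {1,…,i}; in particular all the denominators Δ^{(0)}_i(g) are nonzero. -/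
open Matrix

/-- The matrix unit `E_{k,l}` in 1-based indexing (zero matrix if out of range). -/
def Em (n k l : ℕ) : Matrix (Fin (n+1)) (Fin (n+1)) ℂ :=
  Matrix.of fun a b => if (a : ℕ) + 1 = k ∧ (b : ℕ) + 1 = l then 1 else 0

/-- The lower unipotent one-parameter element `y_i(c) = I + c E_{i+1,i}` (1-based `i`). -/
noncomputable def ym (n i : ℕ) (c : ℂ) : Matrix (Fin (n+1)) (Fin (n+1)) ℂ :=
  1 + c • Em n (i+1) i

/-- The coweight torus element `α_i^∨(c)`: diagonal with `c` at position `i`,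
`c⁻¹` at position `i+1` (1-based). -/
noncomputable def alco (n i : ℕ) (c : ℂ) : Matrix (Fin (n+1)) (Fin (n+1)) ℂ :=
  Matrix.diagonal fun a => if (a : ℕ) + 1 = i then c else if (a : ℕ) + 1 = i + 1 then c⁻¹ else 1

/-- `𝐲_i(c) = y_i(c) · α_i^∨(c⁻¹)`. -/
noncomputable def Yb (n i : ℕ) (c : ℂ) : Matrix (Fin (n+1)) (Fin (n+1)) ℂ :=
  ym n i c * alco n i c⁻¹

/-- `Θ(c) = ∏_{k=1}^{n} ( 𝐲_1(c_{k,1}) 𝐲_2(c_{k,2}) ⋯ 𝐲_{n+1−k}(c_{k,n+1−k}) )`,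
the product over `k` taken in increasing order. -/
noncomputable def Theta (n : ℕ) (c : ℕ → ℕ → ℂ) : Matrix (Fin (n+1)) (Fin (n+1)) ℂ :=
  ((List.range n).map fun k =>
    ((List.range (n - k)).map fun l => Yb n (l+1) (c (k+1) (l+1))).prod).prod

noncomputable def Rw (n : ℕ) (c : ℕ → ℕ → ℂ) (k : ℕ) : Matrix (Fin (n+1)) (Fin (n+1)) ℂ :=
  ((List.range (n - k)).map fun l => Yb n (l+1) (c (k+1) (l+1))).prod

noncomputable def Tm (n : ℕ) (c : ℕ → ℕ → ℂ) (j : ℕ) : Matrix (Fin (n+1)) (Fin (n+1)) ℂ :=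
  ((List.range j).map fun i => Rw n c (n - j + i)).prod

lemma Theta_eq_Tm (n : ℕ) (c : ℕ → ℕ → ℂ) : Theta n c = Tm n c n := by
  unfold Theta Tm Rw
  simp

lemma Tm_succ (n : ℕ) (c : ℕ → ℕ → ℂ) (j : ℕ) (h : j + 1 ≤ n) :
    Tm n c (j+1) = Rw n c (n - (j+1)) * Tm n c j := by
  unfold Tm
  rw [List.range_succ_eq_map, List.map_cons, List.prod_cons, List.map_map]
  have h0 : n - (j+1) + 0 = n - (j+1) := by omega
  have h1 : ((fun i => Rw n c (n - (j+1) + i)) ∘ Nat.succ) = fun i => Rw n c (n - j + i) := by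
    funext i
    have e : n - (j+1) + Nat.succ i = n - j + i := by omega
    simp only [Function.comp_apply, e]
  rw [h1, h0]

lemma mul_Em (n : ℕ) (M : Matrix (Fin (n+1)) (Fin (n+1)) ℂ) (i : ℕ) (hi : i ≤ n)
    (r q : Fin (n+1)) :
    (M * Em n (i+1) i) r q = if (q:ℕ)+1 = i then M r ⟨i, by omega⟩ else 0 := by
  rw [Matrix.mul_apply]
  simp only [Em, Matrix.of_apply, mul_ite, mul_one, mul_zero, Nat.add_right_cancel_iff]
  by_cases hq : (q:ℕ)+1 = i
  · simp only [hq, and_true]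
    have h1 : ∀ k : Fin (n+1), ((k:ℕ) = i) = (k = ⟨i, by omega⟩) := by
      intro k; simp [Fin.ext_iff]
    simp only [h1]
    rw [Finset.sum_ite_eq' Finset.univ (⟨i, by omega⟩ : Fin (n+1)) (fun k => M r k)]
    simp
  · simp [hq]

/-- Entry formula for right multiplication by `Yb n (j+1) b`. -/
lemma mul_Yb_apply (n : ℕ) (M : Matrix (Fin (n+1)) (Fin (n+1)) ℂ) (j : ℕ) (hj : j + 1 ≤ n)
    (b : ℂ) (r q : Fin (n+1)) :
    (M * Yb n (j+1) b) r q =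
      (M r q + b * (if (q:ℕ)+1 = j+1 then M r ⟨j+1, by omega⟩ else 0)) *
        (if (q:ℕ)+1 = j+1 then b⁻¹ else if (q:ℕ) = j+1 then b else 1) := by
  have : M * Yb n (j+1) b = (M * ym n (j+1) b) * alco n (j+1) b⁻¹ := by
    rw [Yb, ← Matrix.mul_assoc]
  rw [this, alco, Matrix.mul_diagonal]
  congr 1
  · rw [ym, Matrix.mul_add, Matrix.mul_one, Matrix.mul_smul]
    simp only [Matrix.add_apply, Matrix.smul_apply, smul_eq_mul, mul_Em n M (j+1) hj]
  · split_ifs <;> first | rfl | (exact inv_inv b) | omega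

/-- `R` is lower bidiagonal with unit subdiagonal in the first `j+1` rows/cols,
identity beyond. Diagonal values in the top block are unconstrained. -/
def IsBd (n j : ℕ) (R : Matrix (Fin (n+1)) (Fin (n+1)) ℂ) : Prop :=
  (∀ r q : Fin (n+1), (q:ℕ)+1 = r → (r:ℕ) ≤ j → R r q = 1) ∧
  (∀ r q : Fin (n+1), (r:ℕ) ≠ (q:ℕ) → ¬((q:ℕ)+1 = r ∧ (r:ℕ) ≤ j) → R r q = 0) ∧
  (∀ r : Fin (n+1), j < (r:ℕ) → R r r = 1)

lemma isBd_prod (n j : ℕ) (hj : j ≤ n) (a : ℕ → ℂ) (ha : ∀ l, 1 ≤ l → l ≤ j → a l ≠ 0) :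
    IsBd n j (((List.range j).map fun l => Yb n (l+1) (a (l+1))).prod) := by
  induction j with
  | zero =>
    refine ⟨fun r q h1 h2 => by omega, fun r q h1 h2 => ?_, fun r h => Matrix.one_apply_eq r⟩
    simp only [List.range_zero, List.map_nil, List.prod_nil]
    exact Matrix.one_apply_ne (fun he => h1 (by rw [he]))
  | succ j ih =>
    have hj' : j ≤ n := by omega
    obtain ⟨h1, h2, h3⟩ := ih hj' (fun l hl1 hl2 => ha l hl1 (by omega))
    set R := ((List.range j).map fun l => Yb n (l+1) (a (l+1))).prod with hR
    rw [List.range_succ, List.map_append, List.prod_append, List.map_cons, List.map_nil,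
      List.prod_cons, List.prod_nil, mul_one]
    set b := a (j+1) with hb
    have hbne : b ≠ 0 := ha (j+1) (by omega) le_rfl
    have key : ∀ r q : Fin (n+1), (R * Yb n (j+1) b) r q =
        (R r q + b * (if (q:ℕ)+1 = j+1 then R r ⟨j+1, by omega⟩ else 0)) *
          (if (q:ℕ)+1 = j+1 then b⁻¹ else if (q:ℕ) = j+1 then b else 1) :=
      fun r q => mul_Yb_apply n R j hj b r q
    refine ⟨fun r q hq1 hq2 => ?_, fun r q hq1 hq2 => ?_, fun r hr => ?_⟩
    · rw [key]
      by_cases hrj : (r:ℕ) = j+1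
      · -- r = j+1, q = j : (0 + b*1) * b⁻¹
        have hqj : (q:ℕ)+1 = j+1 := by omega
        have hRrq : R r q = 0 := h2 r q (by omega) (by omega)
        have hRrr : R r ⟨j+1, by omega⟩ = 1 := by
          have he : (⟨j+1, by omega⟩ : Fin (n+1)) = r := Fin.ext (by simpa using hrj.symm)
          rw [he]; exact h3 r (by omega)
        rw [if_pos hqj, if_pos hqj, hRrq, hRrr]
        field_simp
        ring
      · -- r ≤ j
        have hrle : (r:ℕ) ≤ j := by omega
        have hq : ¬((q:ℕ)+1 = j+1) := by omega
        have hq2' : ¬((q:ℕ) = j+1) := by omega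
        rw [if_neg hq, if_neg hq, if_neg hq2', h1 r q hq1 hrle]
        ring
    · rw [key]
      have hRrq : R r q = 0 := h2 r q hq1 (by omega)
      have hz : (if (q:ℕ)+1 = j+1 then R r ⟨j+1, by omega⟩ else 0) = 0 := by
        by_cases hqj : (q:ℕ)+1 = j+1
        · rw [if_pos hqj]
          refine h2 r _ ?_ ?_
          · simp only []
            omega
          · simp only []
            omega
        · rw [if_neg hqj]
      rw [hRrq, hz]
      ring
    · rw [key]
      have hq : ¬((r:ℕ)+1 = j+1) := by omega
      have hq2' : ¬((r:ℕ) = j+1) := by omega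
      rw [if_neg hq, if_neg hq, if_neg hq2', h3 r (by omega)]
      ring

lemma det_Yb (n i : ℕ) (hi1 : 1 ≤ i) (hi2 : i ≤ n) (c : ℂ) (hc : c ≠ 0) :
    (Yb n i c).det = 1 := by
  have hym : (ym n i c).det = 1 := by
    have ht : (ym n i c).BlockTriangular OrderDual.toDual := by
      intro r q h
      have hrq : (r:ℕ) < (q:ℕ) := h
      have h1 : r ≠ q := fun he => by rw [he] at hrq; omega
      have h2 : ¬((r:ℕ)+1 = i+1 ∧ (q:ℕ)+1 = i) := by omega
      simp only [ym, Matrix.add_apply, Matrix.one_apply, Matrix.smul_apply, Em,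
        Matrix.of_apply, smul_eq_mul]
      rw [if_neg h1, if_neg h2]
      ring
    rw [Matrix.det_of_lowerTriangular _ ht]
    apply Finset.prod_eq_one
    intro x _
    have h2 : ¬((x:ℕ)+1 = i+1 ∧ (x:ℕ)+1 = i) := by omega
    simp only [ym, Matrix.add_apply, Matrix.one_apply, Matrix.smul_apply, Em,
      Matrix.of_apply, smul_eq_mul]
    rw [if_neg h2]
    simp
  have halco : (alco n i c⁻¹).det = 1 := by
    rw [alco, Matrix.det_diagonal]
    have hpt : ∀ x : Fin (n+1),
        (if (x:ℕ)+1 = i then c⁻¹ else if (x:ℕ)+1 = i+1 then c⁻¹⁻¹ else 1)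
        = (if x = (⟨i-1, by omega⟩ : Fin (n+1)) then c⁻¹ else 1) *
          (if x = (⟨i, by omega⟩ : Fin (n+1)) then c else 1) := by
      intro x
      rw [inv_inv]
      simp only [Fin.ext_iff]
      split_ifs
      all_goals try (exfalso; omega)
      all_goals simp
    rw [Finset.prod_congr rfl (fun x _ => hpt x), Finset.prod_mul_distrib,
      Finset.prod_ite_eq' Finset.univ, Finset.prod_ite_eq' Finset.univ]
    simp [inv_mul_cancel₀ hc]
  rw [Yb, Matrix.det_mul, hym, halco, one_mul]

lemma det_Rw (n : ℕ) (c : ℕ → ℕ → ℂ)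
    (hc : ∀ k l, 1 ≤ k → 1 ≤ l → k + l ≤ n + 1 → c k l ≠ 0)
    (k : ℕ) (hk : k ≤ n) : (Rw n c k).det = 1 := by
  rw [Rw]
  have := map_list_prod (Matrix.detMonoidHom : Matrix (Fin (n+1)) (Fin (n+1)) ℂ →* ℂ)
    ((List.range (n-k)).map fun l => Yb n (l+1) (c (k+1) (l+1)))
  simp only [Matrix.coe_detMonoidHom] at this
  rw [this, List.map_map]
  apply List.prod_eq_one
  intro x hx
  obtain ⟨l, hl, rfl⟩ := List.mem_map.mp hx
  have hl' : l < n - k := List.mem_range.mp hl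
  exact det_Yb n (l+1) (by omega) (by omega) _ (hc (k+1) (l+1) (by omega) (by omega) (by omega))

lemma det_Tm (n : ℕ) (c : ℕ → ℕ → ℂ)
    (hc : ∀ k l, 1 ≤ k → 1 ≤ l → k + l ≤ n + 1 → c k l ≠ 0)
    (j : ℕ) (hj : j ≤ n) : (Tm n c j).det = 1 := by
  rw [Tm]
  have := map_list_prod (Matrix.detMonoidHom : Matrix (Fin (n+1)) (Fin (n+1)) ℂ →* ℂ)
    ((List.range j).map fun i => Rw n c (n - j + i))
  simp only [Matrix.coe_detMonoidHom] at this
  rw [this, List.map_map]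
  apply List.prod_eq_one
  intro x hx
  obtain ⟨i, hi, rfl⟩ := List.mem_map.mp hx
  have hi' : i < j := List.mem_range.mp hi
  exact det_Rw n c hc (n - j + i) (by omega)

lemma Rw_isBd (n : ℕ) (c : ℕ → ℕ → ℂ)
    (hc : ∀ k l, 1 ≤ k → 1 ≤ l → k + l ≤ n + 1 → c k l ≠ 0)
    (j : ℕ) (hj : j + 1 ≤ n) : IsBd n (j+1) (Rw n c (n - (j+1))) := by
  have e : n - (n - (j+1)) = j + 1 := by omega
  rw [Rw, e]
  exact isBd_prod n (j+1) hj (fun l => c (n-(j+1)+1) l)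
    (fun l h1 h2 => hc _ _ (by omega) h1 (by omega))

lemma Tm_rows (n : ℕ) (c : ℕ → ℕ → ℂ)
    (hc : ∀ k l, 1 ≤ k → 1 ≤ l → k + l ≤ n + 1 → c k l ≠ 0) :
    ∀ j, j ≤ n → ∀ r q : Fin (n+1), j < (r:ℕ) →
      Tm n c j r q = (1 : Matrix (Fin (n+1)) (Fin (n+1)) ℂ) r q := by
  intro j
  induction j with
  | zero => intro _ r q _; rw [Tm]; simp
  | succ j ih =>
    intro hj r q hr
    rw [Tm_succ n c j hj]
    obtain ⟨h1, h2, h3⟩ := Rw_isBd n c hc j hj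
    rw [Matrix.mul_apply, Finset.sum_eq_single r
      (fun k _ hk => by
        rw [h2 r k (fun hv => hk (Fin.ext hv.symm)) (by omega), zero_mul])
      (fun h => absurd (Finset.mem_univ r) h)]
    rw [h3 r (by omega), one_mul]
    exact ih (by omega) r q (by omega)

/-- If the rows of `M` from index `t` on are identity rows, then the leading principal
`t×t` minor of `M` equals `det M`. -/
lemma det_topLeft (n : ℕ) (M : Matrix (Fin (n+1)) (Fin (n+1)) ℂ) (t : ℕ) (ht : t ≤ n+1)
    (hrow : ∀ r q : Fin (n+1), t ≤ (r:ℕ) →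
      M r q = (1 : Matrix (Fin (n+1)) (Fin (n+1)) ℂ) r q) :
    (M.submatrix (fun a : Fin t => (⟨(a:ℕ), by have := a.isLt; omega⟩ : Fin (n+1)))
      (fun a : Fin t => (⟨(a:ℕ), by have := a.isLt; omega⟩ : Fin (n+1)))).det = M.det := by
  have hadd : t + (n+1-t) = n+1 := by omega
  set e : Fin t ⊕ Fin (n+1-t) ≃ Fin (n+1) :=
    finSumFinEquiv.trans (finCongr hadd) with he
  have heL : ∀ a : Fin t, ((e (Sum.inl a) : ℕ)) = (a : ℕ) := by
    intro a; rw [he]; simp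
  have heR : ∀ b : Fin (n+1-t), ((e (Sum.inr b) : ℕ)) = t + (b : ℕ) := by
    intro b; rw [he]; simp
  rw [← Matrix.det_submatrix_equiv_self e M]
  have hblock : M.submatrix e e =
      Matrix.fromBlocks
        (M.submatrix (fun a : Fin t => (⟨(a:ℕ), by have := a.isLt; omega⟩ : Fin (n+1)))
          (fun a : Fin t => (⟨(a:ℕ), by have := a.isLt; omega⟩ : Fin (n+1))))
        (M.submatrix (fun a : Fin t => (⟨(a:ℕ), by have := a.isLt; omega⟩ : Fin (n+1)))
          (fun b : Fin (n+1-t) => (⟨t + (b:ℕ), by have := b.isLt; omega⟩ : Fin (n+1))))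
        0 1 := by
    ext x y
    rcases x with a | a <;> rcases y with b | b <;>
      simp only [Matrix.submatrix_apply, Matrix.fromBlocks_apply₁₁, Matrix.fromBlocks_apply₁₂,
        Matrix.fromBlocks_apply₂₁, Matrix.fromBlocks_apply₂₂]
    · rw [show e (Sum.inl a) = (⟨(a:ℕ), by have := a.isLt; omega⟩ : Fin (n+1)) from
        Fin.ext (heL a), show e (Sum.inl b) = (⟨(b:ℕ), by have := b.isLt; omega⟩ : Fin (n+1)) from
        Fin.ext (heL b)]
    · rw [show e (Sum.inl a) = (⟨(a:ℕ), by have := a.isLt; omega⟩ : Fin (n+1)) from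
        Fin.ext (heL a), show e (Sum.inr b) = (⟨t+(b:ℕ), by have := b.isLt; omega⟩ : Fin (n+1)) from
        Fin.ext (heR b)]
    · rw [hrow _ _ (by rw [heR]; omega)]
      have hne : e (Sum.inr a) ≠ e (Sum.inl b) := by
        intro h
        have h2 : ((e (Sum.inr a)):ℕ) = ((e (Sum.inl b)):ℕ) := by rw [h]
        rw [heR, heL] at h2
        have := b.isLt
        omega
      simp [Matrix.one_apply, hne]
    · rw [hrow _ _ (by rw [heR]; omega)]
      by_cases hab : a = b
      · subst hab; simp
      · have hne : e (Sum.inr a) ≠ e (Sum.inr b) := by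
          intro h
          exact hab (Sum.inr_injective (e.injective h))
        simp [Matrix.one_apply, hne, hab]
  rw [hblock, Matrix.det_fromBlocks_zero₂₁]
  simp

lemma bd_row {n j : ℕ} {R : Matrix (Fin (n+1)) (Fin (n+1)) ℂ} (hbd : IsBd n j R)
    (r : ℕ) (hr1 : 1 ≤ r) (hr2 : r ≤ j) (hrn : r ≤ n) (k : Fin (n+1)) :
    R ⟨r, by omega⟩ k =
      (if (k:ℕ) = r-1 then 1 else 0) +
      (if (k:ℕ) = r then R ⟨r, by omega⟩ ⟨r, by omega⟩ else 0) := by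
  obtain ⟨h1, h2, h3⟩ := hbd
  by_cases e1 : (k:ℕ) = r-1
  · rw [if_pos e1, if_neg (by omega)]
    rw [h1 ⟨r, by omega⟩ k (show (k:ℕ)+1 = r by omega) (show r ≤ j by omega), add_zero]
  · by_cases e2 : (k:ℕ) = r
    · rw [if_neg e1, if_pos e2]
      have hk : k = ⟨r, by omega⟩ := Fin.ext e2
      rw [hk, zero_add]
    · rw [if_neg e1, if_neg e2, h2 ⟨r, by omega⟩ k
        (show r ≠ (k:ℕ) from fun h => e2 h.symm)
        (show ¬((k:ℕ)+1 = r ∧ r ≤ j) from fun hh => e1 (by omega)), add_zero]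

lemma Tm_minor (n : ℕ) (c : ℕ → ℕ → ℂ)
    (hc : ∀ k l, 1 ≤ k → 1 ≤ l → k + l ≤ n + 1 → c k l ≠ 0) :
    ∀ j (_ : j ≤ n) s (_ : 1 ≤ s) (_ : s ≤ j + 1),
      ((Tm n c j).submatrix
        (fun a : Fin s => (⟨j+1-s+(a:ℕ), by have := a.isLt; omega⟩ : Fin (n+1)))
        (fun a : Fin s => (⟨(a:ℕ), by have := a.isLt; omega⟩ : Fin (n+1)))).det = 1 := by
  intro j
  induction j with
  | zero =>
    intro _ s hs1 hs2
    have hs : s = 1 := by omega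
    subst hs
    rw [Tm]
    simp only [List.range_zero, List.map_nil, List.prod_nil]
    rw [Matrix.det_fin_one, Matrix.submatrix_apply]
    simp [Matrix.one_apply, Fin.ext_iff]
  | succ j ih =>
    intro hj s hs1 hs2
    by_cases hcase : s ≤ j + 1
    · -- bidiagonal reduction to level j
      rw [Tm_succ n c j hj]
      have hbd := Rw_isBd n c hc j hj
      obtain ⟨h1, h2, h3⟩ := hbd
      set R := Rw n c (n - (j+1)) with hRdef
      set S := Tm n c j with hSdef
      have hkey : ((R * S).submatrix
          (fun a : Fin s => (⟨j+1+1-s+(a:ℕ), by have := a.isLt; omega⟩ : Fin (n+1)))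
          (fun a : Fin s => (⟨(a:ℕ), by have := a.isLt; omega⟩ : Fin (n+1)))) =
          (Matrix.of fun a b : Fin s =>
            if (a:ℕ) = (b:ℕ) then (1:ℂ) else if (b:ℕ) = (a:ℕ)+1 then
              R ⟨j+1+1-s+(a:ℕ), by have := a.isLt; omega⟩
                ⟨j+1+1-s+(a:ℕ), by have := a.isLt; omega⟩ else 0) *
          (S.submatrix
            (fun a : Fin s => (⟨j+1-s+(a:ℕ), by have := a.isLt; omega⟩ : Fin (n+1)))
            (fun a : Fin s => (⟨(a:ℕ), by have := a.isLt; omega⟩ : Fin (n+1)))) := by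
        ext a b
        have ha := a.isLt
        have hb := b.isLt
        rw [Matrix.submatrix_apply, Matrix.mul_apply, Matrix.mul_apply]
        have hr1 : 1 ≤ j+1+1-s+(a:ℕ) := by omega
        have hr2 : j+1+1-s+(a:ℕ) ≤ j+1 := by omega
        have hrn : j+1+1-s+(a:ℕ) ≤ n := by omega
        have hrow := bd_row ⟨h1, h2, h3⟩ (j+1+1-s+(a:ℕ)) hr1 hr2 hrn
        -- evaluate the left sum
        have hL : (∑ k, R ⟨j+1+1-s+(a:ℕ), by omega⟩ k * S k ⟨(b:ℕ), by omega⟩)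
            = S ⟨j+1-s+(a:ℕ), by omega⟩ ⟨(b:ℕ), by omega⟩ +
              R ⟨j+1+1-s+(a:ℕ), by omega⟩ ⟨j+1+1-s+(a:ℕ), by omega⟩ *
                S ⟨j+1+1-s+(a:ℕ), by omega⟩ ⟨(b:ℕ), by omega⟩ := by
          have e1 : (∑ k, R ⟨j+1+1-s+(a:ℕ), by omega⟩ k * S k ⟨(b:ℕ), by omega⟩)
              = ∑ k : Fin (n+1),
                ((if k = (⟨j+1-s+(a:ℕ), by omega⟩ : Fin (n+1)) then S k ⟨(b:ℕ), by omega⟩ else 0) +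
                 (if k = (⟨j+1+1-s+(a:ℕ), by omega⟩ : Fin (n+1)) then
                    R ⟨j+1+1-s+(a:ℕ), by omega⟩ ⟨j+1+1-s+(a:ℕ), by omega⟩ *
                      S k ⟨(b:ℕ), by omega⟩ else 0)) := by
            refine Finset.sum_congr rfl (fun k _ => ?_)
            rw [hrow k, add_mul, ite_mul, ite_mul, one_mul, zero_mul]
            congr 1
            · congr 1
              rw [show ((k:ℕ) = j+1+1-s+(a:ℕ)-1) = (k = (⟨j+1-s+(a:ℕ), by omega⟩ : Fin (n+1)))
                from propext ⟨fun h => Fin.ext (by simp; omega), fun h => by rw [h]; simp; omega⟩]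
            · congr 1
              rw [show ((k:ℕ) = j+1+1-s+(a:ℕ)) = (k = (⟨j+1+1-s+(a:ℕ), by omega⟩ : Fin (n+1)))
                from propext ⟨fun h => Fin.ext (by simp; omega), fun h => by rw [h]⟩]
          rw [e1, Finset.sum_add_distrib,
            Finset.sum_ite_eq' Finset.univ (⟨j+1-s+(a:ℕ), by omega⟩ : Fin (n+1))
              (fun k => S k ⟨(b:ℕ), by omega⟩),
            Finset.sum_ite_eq' Finset.univ (⟨j+1+1-s+(a:ℕ), by omega⟩ : Fin (n+1))
              (fun k => R ⟨j+1+1-s+(a:ℕ), by omega⟩ ⟨j+1+1-s+(a:ℕ), by omega⟩ *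
                S k ⟨(b:ℕ), by omega⟩)]
          simp
        rw [hL]
        -- evaluate the right sum
        have e2 : (∑ k : Fin s,
              (Matrix.of fun a b : Fin s =>
                if (a:ℕ) = (b:ℕ) then (1:ℂ) else if (b:ℕ) = (a:ℕ)+1 then
                  R ⟨j+1+1-s+(a:ℕ), by have := a.isLt; omega⟩
                    ⟨j+1+1-s+(a:ℕ), by have := a.isLt; omega⟩ else 0) a k *
              (S.submatrix
                (fun a : Fin s => (⟨j+1-s+(a:ℕ), by have := a.isLt; omega⟩ : Fin (n+1)))
                (fun a : Fin s => (⟨(a:ℕ), by have := a.isLt; omega⟩ : Fin (n+1)))) k b)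
            = ∑ k : Fin s,
              ((if k = a then S ⟨j+1-s+(k:ℕ), by have := k.isLt; omega⟩ ⟨(b:ℕ), by omega⟩ else 0) +
               (if (k:ℕ) = (a:ℕ)+1 then
                  R ⟨j+1+1-s+(a:ℕ), by omega⟩ ⟨j+1+1-s+(a:ℕ), by omega⟩ *
                    S ⟨j+1-s+(k:ℕ), by have := k.isLt; omega⟩ ⟨(b:ℕ), by omega⟩ else 0)) := by
          refine Finset.sum_congr rfl (fun k _ => ?_)
          rw [Matrix.submatrix_apply, Matrix.of_apply]
          by_cases ek : k = a
          · rw [if_pos (by rw [ek]), if_pos ek, if_neg (by rw [ek]; omega), add_zero, one_mul]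
          · rw [if_neg (fun hv : (a:ℕ) = (k:ℕ) => ek (Fin.ext hv.symm)), if_neg ek, zero_add,
              ite_mul, zero_mul]
        rw [e2, Finset.sum_add_distrib,
          Finset.sum_ite_eq' Finset.univ a
            (fun k => S ⟨j+1-s+(k:ℕ), by have := k.isLt; omega⟩ ⟨(b:ℕ), by omega⟩)]
        simp only [Finset.mem_univ, if_pos]
        congr 1
        by_cases hlast : (a:ℕ)+1 < s
        · have e3 : (∑ k : Fin s, (if (k:ℕ) = (a:ℕ)+1 then
                R ⟨j+1+1-s+(a:ℕ), by omega⟩ ⟨j+1+1-s+(a:ℕ), by omega⟩ *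
                  S ⟨j+1-s+(k:ℕ), by have := k.isLt; omega⟩ ⟨(b:ℕ), by omega⟩ else 0))
              = ∑ k : Fin s, (if k = (⟨(a:ℕ)+1, hlast⟩ : Fin s) then
                R ⟨j+1+1-s+(a:ℕ), by omega⟩ ⟨j+1+1-s+(a:ℕ), by omega⟩ *
                  S ⟨j+1-s+(k:ℕ), by have := k.isLt; omega⟩ ⟨(b:ℕ), by omega⟩ else 0) := by
            refine Finset.sum_congr rfl (fun k _ => ?_)
            congr 1
            rw [show ((k:ℕ) = (a:ℕ)+1) = (k = (⟨(a:ℕ)+1, hlast⟩ : Fin s))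
              from propext ⟨fun h => Fin.ext (by simp; omega), fun h => by rw [h]⟩]
          rw [e3, Finset.sum_ite_eq' Finset.univ (⟨(a:ℕ)+1, hlast⟩ : Fin s)
            (fun k => R ⟨j+1+1-s+(a:ℕ), by omega⟩ ⟨j+1+1-s+(a:ℕ), by omega⟩ *
              S ⟨j+1-s+(k:ℕ), by have := k.isLt; omega⟩ ⟨(b:ℕ), by omega⟩)]
          simp only [Finset.mem_univ, if_pos]
          congr 2
          exact Fin.ext (by simp; omega)
        · -- a is the last row : the S-term vanishes
          have hz : S ⟨j+1+1-s+(a:ℕ), by omega⟩ ⟨(b:ℕ), by omega⟩ = 0 := by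
            rw [hSdef, Tm_rows n c hc j (by omega) _ _ (by simp; omega)]
            exact Matrix.one_apply_ne (by simp [Fin.ext_iff]; omega)
          rw [hz, mul_zero]
          exact (Finset.sum_eq_zero (fun k _ =>
            if_neg (by have := k.isLt; omega))).symm
      rw [hkey, Matrix.det_mul, ih (by omega) s hs1 hcase, mul_one]
      have htri : (Matrix.of fun a b : Fin s =>
            if (a:ℕ) = (b:ℕ) then (1:ℂ) else if (b:ℕ) = (a:ℕ)+1 then
              R ⟨j+1+1-s+(a:ℕ), by have := a.isLt; omega⟩
                ⟨j+1+1-s+(a:ℕ), by have := a.isLt; omega⟩ else 0).BlockTriangular id := by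
        intro x y hxy
        have hyx : (y:ℕ) < (x:ℕ) := hxy
        rw [Matrix.of_apply, if_neg (by omega), if_neg (by omega)]
      rw [Matrix.det_of_upperTriangular htri]
      exact Finset.prod_eq_one (fun x _ => by rw [Matrix.of_apply, if_pos rfl])
    · -- s = j + 2 : full corner block
      have hs : s = j + 2 := by omega
      subst hs
      have hrowfn : (fun a : Fin (j+2) =>
          (⟨j+1+1-(j+2)+(a:ℕ), by have := a.isLt; omega⟩ : Fin (n+1))) =
          (fun a : Fin (j+2) => (⟨(a:ℕ), by have := a.isLt; omega⟩ : Fin (n+1))) := by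
        funext a; exact Fin.ext (by simp)
      rw [hrowfn]
      rw [det_topLeft n (Tm n c (j+1)) (j+2) (by omega)
        (fun r q hr => Tm_rows n c hc (j+1) hj r q (by omega))]
      exact det_Tm n c hc (j+1) hj

lemma theta_corner (n : ℕ) (c : ℕ → ℕ → ℂ)
    (hc : ∀ k l, 1 ≤ k → 1 ≤ l → k + l ≤ n + 1 → c k l ≠ 0)
    (s : ℕ) (hs1 : 1 ≤ s) (hs2 : s ≤ n+1)
    (f g : Fin s → Fin (n+1))
    (hf : ∀ a, (f a : ℕ) = n+1-s+(a:ℕ)) (hg : ∀ a, (g a : ℕ) = (a:ℕ)) :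
    ((Theta n c).submatrix f g).det = 1 := by
  have hf' : f = fun a : Fin s => (⟨n+1-s+(a:ℕ), by have := a.isLt; omega⟩ : Fin (n+1)) :=
    funext fun a => Fin.ext (by rw [hf])
  have hg' : g = fun a : Fin s => (⟨(a:ℕ), by have := a.isLt; omega⟩ : Fin (n+1)) :=
    funext fun a => Fin.ext (by rw [hg])
  rw [Theta_eq_Tm, hf', hg']
  exact Tm_minor n c hc n le_rfl s hs1 hs2

lemma hfact_det {n : ℕ} (td : Fin (n+1) → ℂ) (Θ : Matrix (Fin (n+1)) (Fin (n+1)) ℂ)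
    (s : ℕ) (f h : Fin s → Fin (n+1)) :
    (((Matrix.diagonal td * Θ).submatrix f h)).det
      = (∏ a, td (f a)) * ((Θ.submatrix f h)).det := by
  have he : (Matrix.diagonal td * Θ).submatrix f h
      = Matrix.diagonal (fun a => td (f a)) * (Θ.submatrix f h) := by
    ext a b
    rw [Matrix.submatrix_apply, Matrix.diagonal_mul, Matrix.diagonal_mul,
      Matrix.submatrix_apply]
  rw [he, Matrix.det_mul, Matrix.det_diagonal]

lemma halg (t1 t0 Q A B : ℂ) (h1 : t1 ≠ 0) (hQ : Q ≠ 0) :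
    (t1*Q*A + t0*Q*B)/(t1*Q) = A + t0/t1*B := by
  field_simp

/-- Evaluation of the decoration: for `g = t·Θ(c)` with `t = diag(t_1,…,t_{n+1}) ∈ SL_{n+1}`,
all the principal generalized minors `Δ_{w₀Λ_i,Λ_i}(g)` are nonzero and
`f_B(g) = Σ_i (Δ_{w₀Λ_i,s_iΛ_i}(g) + Δ_{w₀s_iΛ_i,Λ_i}(g))/Δ_{w₀Λ_i,Λ_i}(g)
 = Σ_j [ Δ_{w₀Λ_j,s_jΛ_j}(Θ(c)) + (t_j/t_{j+1})·Δ_{w₀s_jΛ_j,Λ_j}(Θ(c)) ]`,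
where the minors are on the rows/columns described in the statement. -/
theorem stmt18 (n : ℕ) (hn : 1 ≤ n) (td : Fin (n+1) → ℂ)
    (hdet : (Matrix.diagonal td).det = 1)
    (c : ℕ → ℕ → ℂ) (hc : ∀ k l, 1 ≤ k → 1 ≤ l → k + l ≤ n + 1 → c k l ≠ 0)
    (g : Matrix (Fin (n+1)) (Fin (n+1)) ℂ)
    (hg : g = Matrix.diagonal td * Theta n c) :
    (∀ i : Fin n,
      (g.submatrix
        (fun a : Fin ((i : ℕ) + 1) =>
          (⟨n - (i : ℕ) + (a : ℕ), by have := a.isLt; have := i.isLt; omega⟩ : Fin (n+1)))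
        (fun a : Fin ((i : ℕ) + 1) =>
          (⟨(a : ℕ), by have := a.isLt; have := i.isLt; omega⟩ : Fin (n+1)))).det ≠ 0) ∧
    (∑ i : Fin n,
        ((g.submatrix
            (fun a : Fin ((i : ℕ) + 1) =>
              (⟨n - (i : ℕ) + (a : ℕ), by have := a.isLt; have := i.isLt; omega⟩ : Fin (n+1)))
            (fun a : Fin ((i : ℕ) + 1) =>
              if (a : ℕ) = (i : ℕ) then i.succ
              else (⟨(a : ℕ), by have := a.isLt; have := i.isLt; omega⟩ : Fin (n+1)))).det
          + (g.submatrix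
            (fun a : Fin ((i : ℕ) + 1) =>
              if (a : ℕ) = 0 then
                (⟨n - ((i : ℕ) + 1), by omega⟩ : Fin (n+1))
              else (⟨n - (i : ℕ) + (a : ℕ), by have := a.isLt; have := i.isLt; omega⟩ :
                Fin (n+1)))
            (fun a : Fin ((i : ℕ) + 1) =>
              (⟨(a : ℕ), by have := a.isLt; have := i.isLt; omega⟩ : Fin (n+1)))).det)
        / (g.submatrix
            (fun a : Fin ((i : ℕ) + 1) =>
              (⟨n - (i : ℕ) + (a : ℕ), by have := a.isLt; have := i.isLt; omega⟩ : Fin (n+1)))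
            (fun a : Fin ((i : ℕ) + 1) =>
              (⟨(a : ℕ), by have := a.isLt; have := i.isLt; omega⟩ : Fin (n+1)))).det
      = ∑ j : Fin n,
        (((Theta n c).submatrix
            (fun a : Fin ((j : ℕ) + 1) =>
              (⟨n - (j : ℕ) + (a : ℕ), by have := a.isLt; have := j.isLt; omega⟩ : Fin (n+1)))
            (fun a : Fin ((j : ℕ) + 1) =>
              if (a : ℕ) = (j : ℕ) then j.succ
              else (⟨(a : ℕ), by have := a.isLt; have := j.isLt; omega⟩ : Fin (n+1)))).det
          + (td j.castSucc / td j.succ) *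
            ((Theta n c).submatrix
              (fun a : Fin (n - (j : ℕ)) =>
                if (a : ℕ) = 0 then j.castSucc
                else (⟨(j : ℕ) + 1 + (a : ℕ), by have := a.isLt; have := j.isLt; omega⟩ :
                  Fin (n+1)))
              (fun a : Fin (n - (j : ℕ)) =>
                (⟨(a : ℕ), by have := a.isLt; have := j.isLt; omega⟩ : Fin (n+1)))).det)) := by
  subst hg
  have htd : ∀ r : Fin (n+1), td r ≠ 0 := by
    intro r hr
    rw [Matrix.det_diagonal] at hdet
    have h0 := Finset.prod_eq_zero (Finset.mem_univ r) hr
    rw [hdet] at h0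
    exact one_ne_zero h0
  have hcorner : ∀ i : Fin n,
      (((Theta n c).submatrix
        (fun a : Fin ((i : ℕ) + 1) =>
          (⟨n - (i : ℕ) + (a : ℕ), by have := a.isLt; have := i.isLt; omega⟩ : Fin (n+1)))
        (fun a : Fin ((i : ℕ) + 1) =>
          (⟨(a : ℕ), by have := a.isLt; have := i.isLt; omega⟩ : Fin (n+1))))).det = 1 := by
    intro i
    have hi := i.isLt
    refine theta_corner n c hc ((i:ℕ)+1) (by omega) (by omega) _ _ (fun a => ?_) (fun a => rfl)
    show n - (i:ℕ) + (a:ℕ) = n+1-((i:ℕ)+1)+(a:ℕ)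
    have := a.isLt
    omega
  constructor
  · intro i
    rw [hfact_det, hcorner i, mul_one]
    exact Finset.prod_ne_zero_iff.mpr (fun a _ => htd _)
  · have key : ∀ i : Fin n,
      (((Matrix.diagonal td * Theta n c).submatrix
            (fun a : Fin ((i : ℕ) + 1) =>
              (⟨n - (i : ℕ) + (a : ℕ), by have := a.isLt; have := i.isLt; omega⟩ : Fin (n+1)))
            (fun a : Fin ((i : ℕ) + 1) =>
              if (a : ℕ) = (i : ℕ) then i.succ
              else (⟨(a : ℕ), by have := a.isLt; have := i.isLt; omega⟩ : Fin (n+1)))).det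
          + ((Matrix.diagonal td * Theta n c).submatrix
            (fun a : Fin ((i : ℕ) + 1) =>
              if (a : ℕ) = 0 then
                (⟨n - ((i : ℕ) + 1), by omega⟩ : Fin (n+1))
              else (⟨n - (i : ℕ) + (a : ℕ), by have := a.isLt; have := i.isLt; omega⟩ :
                Fin (n+1)))
            (fun a : Fin ((i : ℕ) + 1) =>
              (⟨(a : ℕ), by have := a.isLt; have := i.isLt; omega⟩ : Fin (n+1)))).det)
        / ((Matrix.diagonal td * Theta n c).submatrix
            (fun a : Fin ((i : ℕ) + 1) =>
              (⟨n - (i : ℕ) + (a : ℕ), by have := a.isLt; have := i.isLt; omega⟩ : Fin (n+1)))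
            (fun a : Fin ((i : ℕ) + 1) =>
              (⟨(a : ℕ), by have := a.isLt; have := i.isLt; omega⟩ : Fin (n+1)))).det
      = ((Theta n c).submatrix
            (fun a : Fin ((i : ℕ) + 1) =>
              (⟨n - (i : ℕ) + (a : ℕ), by have := a.isLt; have := i.isLt; omega⟩ : Fin (n+1)))
            (fun a : Fin ((i : ℕ) + 1) =>
              if (a : ℕ) = (i : ℕ) then i.succ
              else (⟨(a : ℕ), by have := a.isLt; have := i.isLt; omega⟩ : Fin (n+1)))).det
        + td ((fun a : Fin ((i : ℕ) + 1) =>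
              if (a : ℕ) = 0 then
                (⟨n - ((i : ℕ) + 1), by omega⟩ : Fin (n+1))
              else (⟨n - (i : ℕ) + (a : ℕ), by have := a.isLt; have := i.isLt; omega⟩ :
                Fin (n+1))) 0)
          / td ((fun a : Fin ((i : ℕ) + 1) =>
              (⟨n - (i : ℕ) + (a : ℕ), by have := a.isLt; have := i.isLt; omega⟩ : Fin (n+1))) 0)
          * ((Theta n c).submatrix
            (fun a : Fin ((i : ℕ) + 1) =>
              if (a : ℕ) = 0 then
                (⟨n - ((i : ℕ) + 1), by omega⟩ : Fin (n+1))
              else (⟨n - (i : ℕ) + (a : ℕ), by have := a.isLt; have := i.isLt; omega⟩ :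
                Fin (n+1)))
            (fun a : Fin ((i : ℕ) + 1) =>
              (⟨(a : ℕ), by have := a.isLt; have := i.isLt; omega⟩ : Fin (n+1)))).det := by
      intro i
      rw [hfact_det, hfact_det, hfact_det, hcorner i, mul_one]
      rw [Fin.prod_univ_succ, Fin.prod_univ_succ]
      have hQ : (∏ a : Fin (i:ℕ), td ((fun a : Fin ((i : ℕ) + 1) =>
              if (a : ℕ) = 0 then
                (⟨n - ((i : ℕ) + 1), by omega⟩ : Fin (n+1))
              else (⟨n - (i : ℕ) + (a : ℕ), by have := a.isLt; have := i.isLt; omega⟩ :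
                Fin (n+1))) a.succ))
          = ∏ a : Fin (i:ℕ), td ((fun a : Fin ((i : ℕ) + 1) =>
              (⟨n - (i : ℕ) + (a : ℕ), by have := a.isLt; have := i.isLt; omega⟩ :
                Fin (n+1))) a.succ) := by
        refine Finset.prod_congr rfl (fun a _ => ?_)
        simp only [Fin.val_succ]
        rw [if_neg (by omega)]
      rw [hQ]
      exact halg _ _ _ _ _ (htd _) (Finset.prod_ne_zero_iff.mpr (fun a _ => htd _))
    rw [Finset.sum_congr rfl (fun i _ => key i)]
    rw [Finset.sum_add_distrib, Finset.sum_add_distrib]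
    congr 1
    refine Fintype.sum_bijective Fin.rev Fin.rev_bijective _ _ (fun i => ?_)
    have hi := i.isLt
    have e1 : ((fun a : Fin ((i : ℕ) + 1) =>
              if (a : ℕ) = 0 then
                (⟨n - ((i : ℕ) + 1), by omega⟩ : Fin (n+1))
              else (⟨n - (i : ℕ) + (a : ℕ), by have := a.isLt; have := i.isLt; omega⟩ :
                Fin (n+1))) 0) = (Fin.rev i).castSucc := by
      apply Fin.ext
      simp [Fin.val_rev] <;> omega
    have e2 : ((fun a : Fin ((i : ℕ) + 1) =>
              (⟨n - (i : ℕ) + (a : ℕ), by have := a.isLt; have := i.isLt; omega⟩ :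
                Fin (n+1))) 0) = (Fin.rev i).succ := by
      apply Fin.ext
      simp [Fin.val_rev] <;> omega
    have hcast : ((i:ℕ)+1) = n - ((Fin.rev i : Fin n) : ℕ) := by
      simp [Fin.val_rev] <;> omega
    have e3 : ((Theta n c).submatrix
            (fun a : Fin ((i : ℕ) + 1) =>
              if (a : ℕ) = 0 then
                (⟨n - ((i : ℕ) + 1), by omega⟩ : Fin (n+1))
              else (⟨n - (i : ℕ) + (a : ℕ), by have := a.isLt; have := i.isLt; omega⟩ :
                Fin (n+1)))
            (fun a : Fin ((i : ℕ) + 1) =>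
              (⟨(a : ℕ), by have := a.isLt; have := i.isLt; omega⟩ : Fin (n+1)))).det
        = ((Theta n c).submatrix
              (fun a : Fin (n - ((Fin.rev i : Fin n) : ℕ)) =>
                if (a : ℕ) = 0 then (Fin.rev i).castSucc
                else (⟨((Fin.rev i : Fin n) : ℕ) + 1 + (a : ℕ),
                  by have := a.isLt; have := (Fin.rev i).isLt; omega⟩ : Fin (n+1)))
              (fun a : Fin (n - ((Fin.rev i : Fin n) : ℕ)) =>
                (⟨(a : ℕ), by have := a.isLt; have := (Fin.rev i).isLt; omega⟩ :
                  Fin (n+1)))).det := by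
      conv_rhs => rw [← Matrix.det_submatrix_equiv_self (finCongr hcast)]
      congr 1
      ext a b
      simp only [Matrix.submatrix_apply, finCongr_apply, Fin.coe_cast]
      by_cases h0 : (a:ℕ) = 0 <;>
        congr 1 <;> apply Fin.ext <;>
          simp [h0, Fin.val_rev, apply_ite (Fin.val)] <;> omega
    rw [e1, e2, e3]
end

section
/- Let g ∈ SL_{n+1}(ℂ) and suppose g = b·u with b lower triangular and u upper triangular unipotent. Then for every 1 ≤ i ≤ n, the leading principal minor of g of size i is nonzero and the elementary character value χ_i(π⁺(g)) = u_{i,i+1} is given by u_{i,i+1} = ( minor of g on rows {1,…,i} and columns {1,…,i−1,i+1} ) / ( minor of g on rows {1,…,i} and columns {1,…,i} ). -/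
open Matrix

theorem aux_mul_submatrix {n m : ℕ} (hm : m ≤ n+1) (b u : Matrix (Fin (n+1)) (Fin (n+1)) ℂ)
    (hb : ∀ p q : Fin (n+1), p < q → b p q = 0) (c : Fin m → Fin (n+1)) :
    (b*u).submatrix (Fin.castLE hm) c
      = (b.submatrix (Fin.castLE hm) (Fin.castLE hm)) * (u.submatrix (Fin.castLE hm) c) := by
  ext a a'
  simp only [submatrix_apply, mul_apply]
  rw [← Finset.sum_subset (Finset.subset_univ
      ((Finset.univ : Finset (Fin m)).image (Fin.castLE hm)))]
  · rw [Finset.sum_image (fun x _ y _ hxy => Fin.castLE_injective hm hxy)]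
  · intro k _ hk
    have hka : (Fin.castLE hm a : ℕ) < (k : ℕ) := by
      by_contra hcon
      push_neg at hcon
      apply hk
      simp only [Finset.mem_image, Finset.mem_univ, true_and]
      have hkm : (k : ℕ) < m := lt_of_le_of_lt hcon a.isLt
      exact ⟨⟨(k : ℕ), hkm⟩, by ext; simp⟩
    rw [hb _ _ hka, zero_mul]

/-- For `g ∈ SL_{n+1}(ℂ)` with a Gauss decomposition `g = b·u` (`b` lower triangular, `u`
upper triangular unipotent): every leading principal minor of `g` of size `1 ≤ i ≤ n` is
nonzero, and the elementary character value `χ_i(π⁺(g)) = u_{i,i+1}` equals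
`Δ_{Λ_i,s_iΛ_i}(g)/Δ_{Λ_i,Λ_i}(g)`, the ratio of the minor of `g` on rows `{1,…,i}` and
columns `{1,…,i−1,i+1}` by the leading principal minor of size `i`. -/
theorem stmt19 (n : ℕ) (hn : 1 ≤ n) (g b u : Matrix (Fin (n+1)) (Fin (n+1)) ℂ)
    (hdet : g.det = 1) (hg : g = b * u)
    (hb : ∀ p q : Fin (n+1), p < q → b p q = 0)
    (hu : ∀ p q : Fin (n+1), q < p → u p q = 0)
    (hu1 : ∀ p : Fin (n+1), u p p = 1) :
    ∀ i : Fin n,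
      (g.submatrix
          (fun a : Fin ((i : ℕ) + 1) => Fin.castLE (by have := i.isLt; omega) a)
          (fun a : Fin ((i : ℕ) + 1) => Fin.castLE (by have := i.isLt; omega) a)).det ≠ 0 ∧
      u i.castSucc i.succ
        = (g.submatrix
            (fun a : Fin ((i : ℕ) + 1) => Fin.castLE (by have := i.isLt; omega) a)
            (fun a : Fin ((i : ℕ) + 1) =>
              if (a : ℕ) = (i : ℕ) then i.succ
              else Fin.castLE (by have := i.isLt; omega) a)).det
          / (g.submatrix
            (fun a : Fin ((i : ℕ) + 1) => Fin.castLE (by have := i.isLt; omega) a)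
            (fun a : Fin ((i : ℕ) + 1) => Fin.castLE (by have := i.isLt; omega) a)).det := by
  intro i
  have hm : (i : ℕ) + 1 ≤ n + 1 := by have := i.isLt; omega
  have hcast : ∀ {p q : Fin ((i:ℕ)+1)}, p < q → Fin.castLE hm p < Fin.castLE hm q := by
    intro p q h
    rw [Fin.lt_def] at h ⊢
    exact h
  -- b has nonzero diagonal
  have hdetb : ∏ j, b j j = 1 := by
    have h1 : b.det = ∏ j, b j j :=
      det_of_lowerTriangular b (fun p q h => hb p q (OrderDual.toDual_lt_toDual.mp h))
    have h2 : u.det = 1 := by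
      rw [det_of_upperTriangular (fun p q h => hu p q h)]
      simp [hu1]
    rw [hg, det_mul, h1, h2, mul_one] at hdet
    exact hdet
  have hbdiag : ∀ j, b j j ≠ 0 := by
    intro j hj
    have := Finset.prod_eq_zero (f := fun j => b j j) (Finset.mem_univ j) hj
    rw [hdetb] at this
    exact one_ne_zero this
  -- denominator
  have hden : (g.submatrix (Fin.castLE hm) (Fin.castLE hm)).det
      = ∏ a : Fin ((i:ℕ)+1), b (Fin.castLE hm a) (Fin.castLE hm a) := by
    rw [hg, aux_mul_submatrix hm b u hb, det_mul]
    have hu' : (u.submatrix (Fin.castLE hm) (Fin.castLE hm)).det = 1 := by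
      rw [det_of_upperTriangular (M := u.submatrix (Fin.castLE hm) (Fin.castLE hm))
        (fun p q h => hu _ _ (hcast h))]
      simp [hu1]
    rw [hu', mul_one]
    exact det_of_lowerTriangular _ (fun p q h => hb _ _ (hcast (OrderDual.toDual_lt_toDual.mp h)))
  have hdenne : (g.submatrix (Fin.castLE hm) (Fin.castLE hm)).det ≠ 0 := by
    rw [hden]
    exact Finset.prod_ne_zero_iff.2 (fun a _ => hbdiag _)
  -- numerator
  set c : Fin ((i:ℕ)+1) → Fin (n+1) :=
    fun a => if (a : ℕ) = (i : ℕ) then i.succ else Fin.castLE hm a with hc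
  have hnum : (g.submatrix (Fin.castLE hm) c).det
      = (∏ a : Fin ((i:ℕ)+1), b (Fin.castLE hm a) (Fin.castLE hm a)) * u i.castSucc i.succ := by
    rw [hg, aux_mul_submatrix hm b u hb, det_mul]
    congr 1
    · exact det_of_lowerTriangular _ (fun p q h => hb _ _ (hcast (OrderDual.toDual_lt_toDual.mp h)))
    · rw [det_of_upperTriangular (M := u.submatrix (Fin.castLE hm) c)]
      · rw [Finset.prod_eq_single (⟨(i:ℕ), Nat.lt_succ_self _⟩ : Fin ((i:ℕ)+1))]
        · have hrow : Fin.castLE hm (⟨(i:ℕ), Nat.lt_succ_self _⟩ : Fin ((i:ℕ)+1))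
              = i.castSucc := by ext; simp
          have hcol : c (⟨(i:ℕ), Nat.lt_succ_self _⟩ : Fin ((i:ℕ)+1)) = i.succ := by
            simp [hc]
          rw [submatrix_apply, hrow, hcol]
        · intro a _ ha
          have ha' : (a : ℕ) ≠ (i : ℕ) := by
            intro h; apply ha; ext; exact h
          simp only [submatrix_apply, hc, if_neg ha']
          exact hu1 _
        · intro h; exact absurd (Finset.mem_univ _) h
      · intro p q h
        have hq : (q : ℕ) < (p : ℕ) := h
        have hqi : (q : ℕ) < (i : ℕ) := by
          have := p.isLt; omega
        simp only [submatrix_apply, hc, if_neg (Nat.ne_of_lt hqi)]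
        exact hu _ _ (by rw [Fin.lt_def]; exact hq)
  refine ⟨hdenne, ?_⟩
  rw [hnum, hden, mul_comm, mul_div_assoc,
    div_self (by rw [← hden]; exact hdenne), mul_one]
end
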